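/- (Equivalence property (14) of the paper, abstract form) Let U, V, Z be measurable maps from Ω into standard Borel spaces and let T : Ω → {0,1} be measurable. Assume U ⊥⊥ T | σ(V, Z) and that the conditional probability satisfies 0 < E[T | σ(V, Z)] < 1 μ-almost surely (the overlap/common-support condition). Then U ⊥⊥ V | σ(Z) if and only if U ⊥⊥ V | σ(Z, T). -/

import Mathlib

open MeasureTheory ProbabilityTheory Set Filter

section Aux

variable {Ω : Type*} {m' : MeasurableSpace Ω} [mΩ : MeasurableSpace Ω] [StandardBorelSpace Ω]
  {μ : Measure Ω} [IsProbabilityMeasure μ]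
  {β β' : Type*} {mβ : MeasurableSpace β} {mβ' : MeasurableSpace β'}
  {f : Ω → β} {g : Ω → β'}

private lemma indicator_norm_le_one (A : Set Ω) (x : Ω) :
    ‖A.indicator (fun _ => (1 : ℝ)) x‖ ≤ 1 := by
  by_cases hx : x ∈ A <;> simp [Set.indicator_apply, hx]

private lemma indicator_inter_apply (A B : Set Ω) (x : Ω) :
    (A ∩ B).indicator (fun _ => (1 : ℝ)) x
      = A.indicator (fun _ => (1 : ℝ)) x * B.indicator (fun _ => (1 : ℝ)) x := by
  by_cases hA : x ∈ A <;> by_cases hB : x ∈ B <;>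
    simp [Set.indicator_apply, hA, hB]

private lemma integrable_indicator_one (A : Set Ω) (hA : MeasurableSet A) :
    Integrable (A.indicator (fun _ => (1 : ℝ))) μ :=
  (integrable_const (1 : ℝ)).indicator hA

/-- Congruence of conditional independence in the conditioning σ-algebra. -/
lemma condIndepFun_congr' {α' γ' : Type*} [MeasurableSpace α'] [MeasurableSpace γ']
    {F : Ω → α'} {G : Ω → γ'} {m₂ : MeasurableSpace Ω} (h : m' = m₂)
    (h₁ : m' ≤ mΩ) (h₂ : m₂ ≤ mΩ) :
    CondIndepFun m' h₁ F G μ ↔ CondIndepFun m₂ h₂ F G μ := by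
  subst h; rfl

/-- Tower property: if `f ⊥⊥ g | m'` then conditioning on `m' ⊔ σ(g)` is the same as
conditioning on `m'`, for indicators of sets in `σ(f)`. -/
lemma tower_of_condIndepFun (hm' : m' ≤ mΩ)
    (hf : Measurable f) (hg : Measurable g)
    (hind : CondIndepFun m' hm' f g μ) {s : Set β} (hs : MeasurableSet s) :
    μ[(f ⁻¹' s).indicator (fun _ => (1 : ℝ)) | m' ⊔ mβ'.comap g] =ᵐ[μ]
      μ[(f ⁻¹' s).indicator (fun _ => (1 : ℝ)) | m'] := by
  have hm : m' ⊔ mβ'.comap g ≤ mΩ := sup_le hm' hg.comap_le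
  have hmul := (condIndepFun_iff_condExp_inter_preimage_eq_mul hf hg).mp hind
  set indA : Ω → ℝ := (f ⁻¹' s).indicator (fun _ => (1 : ℝ)) with hindA
  set ρ : Ω → ℝ := μ[indA | m'] with hρ
  have hiA : Integrable indA μ := integrable_indicator_one _ (hf hs)
  -- the generating π-system of m' ⊔ σ(g)
  set C : Set (Set Ω) :=
    {S | ∃ B t, MeasurableSet[m'] B ∧ MeasurableSet t ∧ S = B ∩ g ⁻¹' t} with hC
  have hgen : m' ⊔ mβ'.comap g = MeasurableSpace.generateFrom C := by
    refine le_antisymm (sup_le ?_ ?_) (MeasurableSpace.generateFrom_le ?_)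
    · exact fun S hS => MeasurableSpace.measurableSet_generateFrom
        ⟨S, Set.univ, hS, MeasurableSet.univ, by simp⟩
    · rintro S ⟨t, ht, rfl⟩
      exact MeasurableSpace.measurableSet_generateFrom
        ⟨Set.univ, t, @MeasurableSet.univ _ m', ht, by simp⟩
    · rintro S ⟨B, t, hB, ht, rfl⟩
      exact ((le_sup_left : m' ≤ m' ⊔ mβ'.comap g) B hB).inter
        ((le_sup_right : mβ'.comap g ≤ m' ⊔ mβ'.comap g) _ ⟨t, ht, rfl⟩)
  have hpi : IsPiSystem C := by
    rintro S₁ ⟨B₁, t₁, hB₁, ht₁, rfl⟩ S₂ ⟨B₂, t₂, hB₂, ht₂, rfl⟩ -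
    refine ⟨B₁ ∩ B₂, t₁ ∩ t₂, hB₁.inter hB₂, ht₁.inter ht₂, ?_⟩
    ext x; simp only [Set.mem_inter_iff, Set.mem_preimage]; tauto
  -- the set-integral property for all sets in m' ⊔ σ(g)
  have key : ∀ S, MeasurableSet[m' ⊔ mβ'.comap g] S →
      ∫ x in S, ρ x ∂μ = ∫ x in S, indA x ∂μ := by
    intro S hS
    refine MeasurableSpace.induction_on_inter
      (C := fun S _ => ∫ x in S, ρ x ∂μ = ∫ x in S, indA x ∂μ)
      hgen hpi ?_ ?_ ?_ ?_ S hS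
    · simp
    · rintro S ⟨B, t, hB, ht, rfl⟩
      set indB : Ω → ℝ := (g ⁻¹' t).indicator (fun _ => (1 : ℝ)) with hindB
      have hiB : Integrable indB μ := integrable_indicator_one _ (hg ht)
      have hiAB : Integrable (indA * indB) μ := by
        refine (hiB.bdd_mul ?_ (Eventually.of_forall (indicator_norm_le_one _)))
        exact (measurable_const.indicator (hf hs)).aestronglyMeasurable
      have hiρB : Integrable (ρ * indB) μ := by
        refine ((integrable_condExp.bdd_mul ?_ (Eventually.of_forall (indicator_norm_le_one _))).congr
          (Eventually.of_forall fun x => mul_comm _ _))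
        exact (measurable_const.indicator (hg ht)).aestronglyMeasurable
      have e1 : μ[ρ * indB | m'] =ᵐ[μ] ρ * μ[indB | m'] :=
        condExp_mul_of_stronglyMeasurable_left stronglyMeasurable_condExp hiρB hiB
      have e2 : μ[indA * indB | m'] =ᵐ[μ]
          fun ω => ρ ω * (μ[indB | m']) ω := by
        have heq : indA * indB = (f ⁻¹' s ∩ g ⁻¹' t).indicator (fun _ => (1 : ℝ)) :=
          funext fun x => (indicator_inter_apply _ _ x).symm
        rw [heq]
        exact hmul s t hs ht
      have e3 : μ[ρ * indB | m'] =ᵐ[μ] μ[indA * indB | m'] :=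
        e1.trans e2.symm
      calc ∫ x in B ∩ g ⁻¹' t, ρ x ∂μ
          = ∫ x in B, (g ⁻¹' t).indicator ρ x ∂μ := (setIntegral_indicator (hg ht)).symm
        _ = ∫ x in B, (ρ * indB) x ∂μ := by
            refine integral_congr_ae (Eventually.of_forall fun x => ?_)
            by_cases hx : x ∈ g ⁻¹' t <;>
              simp [Set.indicator_apply, hx, hindB, Pi.mul_apply]
        _ = ∫ x in B, (μ[ρ * indB | m']) x ∂μ := (setIntegral_condExp hm' hiρB hB).symm
        _ = ∫ x in B, (μ[indA * indB | m']) x ∂μ :=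
            integral_congr_ae (ae_restrict_of_ae e3)
        _ = ∫ x in B, (indA * indB) x ∂μ := setIntegral_condExp hm' hiAB hB
        _ = ∫ x in B, (g ⁻¹' t).indicator indA x ∂μ := by
            refine integral_congr_ae (Eventually.of_forall fun x => ?_)
            by_cases hx : x ∈ g ⁻¹' t <;>
              simp [Set.indicator_apply, hx, hindB, Pi.mul_apply]
        _ = ∫ x in B ∩ g ⁻¹' t, indA x ∂μ := setIntegral_indicator (hg ht)
    · intro t htm iht
      have ht' : MeasurableSet t := hm _ htm
      have h1 : ∫ x in t, ρ x ∂μ + ∫ x in tᶜ, ρ x ∂μ = ∫ x, ρ x ∂μ :=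
        integral_add_compl ht' integrable_condExp
      have h2 : ∫ x in t, indA x ∂μ + ∫ x in tᶜ, indA x ∂μ = ∫ x, indA x ∂μ :=
        integral_add_compl ht' hiA
      have h3 : ∫ x, ρ x ∂μ = ∫ x, indA x ∂μ := integral_condExp hm'
      linarith
    · intro F hdisj hmeasF hCF
      have hmF : ∀ i, MeasurableSet (F i) := fun i => hm _ (hmeasF i)
      rw [integral_iUnion hmF hdisj integrable_condExp.integrableOn,
        integral_iUnion hmF hdisj hiA.integrableOn]
      exact tsum_congr hCF
  refine (ae_eq_condExp_of_forall_setIntegral_eq hm hiA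
    (fun S _ _ => integrable_condExp.integrableOn)
    (fun S hS _ => key S hS) ?_).symm
  exact StronglyMeasurable.aestronglyMeasurable (stronglyMeasurable_condExp.mono
    (le_sup_left : m' ≤ m' ⊔ mβ'.comap g))

/-- Converse of the tower property: conditional independence from the condexp equality. -/
lemma condIndepFun_of_tower (hm' : m' ≤ mΩ)
    (hf : Measurable f) (hg : Measurable g)
    (h : ∀ s : Set β, MeasurableSet s →
      μ[(f ⁻¹' s).indicator (fun _ => (1 : ℝ)) | m' ⊔ mβ'.comap g] =ᵐ[μ]
        μ[(f ⁻¹' s).indicator (fun _ => (1 : ℝ)) | m']) :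
    CondIndepFun m' hm' f g μ := by
  rw [condIndepFun_iff_condExp_inter_preimage_eq_mul hf hg]
  intro s t hs ht
  have hm : m' ⊔ mβ'.comap g ≤ mΩ := sup_le hm' hg.comap_le
  set indA : Ω → ℝ := (f ⁻¹' s).indicator (fun _ => (1 : ℝ)) with hindA
  set indB : Ω → ℝ := (g ⁻¹' t).indicator (fun _ => (1 : ℝ)) with hindB
  set ρ : Ω → ℝ := μ[indA | m'] with hρ
  have hiA : Integrable indA μ := integrable_indicator_one _ (hf hs)
  have hiB : Integrable indB μ := integrable_indicator_one _ (hg ht)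
  have hBm : MeasurableSet[m' ⊔ mβ'.comap g] (g ⁻¹' t) :=
    (le_sup_right : mβ'.comap g ≤ m' ⊔ mβ'.comap g) _ ⟨t, ht, rfl⟩
  have hsmB : StronglyMeasurable[m' ⊔ mβ'.comap g] indB :=
    (stronglyMeasurable_const (b := (1 : ℝ))).indicator hBm
  have hiBA : Integrable (indB * indA) μ := by
    refine (hiA.bdd_mul ?_ (Eventually.of_forall (indicator_norm_le_one _)))
    exact (measurable_const.indicator (hg ht)).aestronglyMeasurable
  have hiρB : Integrable (ρ * indB) μ := by
    refine ((integrable_condExp.bdd_mul ?_ (Eventually.of_forall (indicator_norm_le_one _))).congr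
      (Eventually.of_forall fun x => mul_comm _ _))
    exact (measurable_const.indicator (hg ht)).aestronglyMeasurable
  have hiBρ : Integrable (indB * ρ) μ :=
    hiρB.congr (Eventually.of_forall fun x => mul_comm _ _)
  -- step 1: condexp over m' ⊔ σ(g)
  have e1 : μ[indB * indA | m' ⊔ mβ'.comap g] =ᵐ[μ]
      indB * μ[indA | m' ⊔ mβ'.comap g] :=
    condExp_mul_of_stronglyMeasurable_left hsmB hiBA hiA
  have e2 : indB * μ[indA | m' ⊔ mβ'.comap g] =ᵐ[μ] indB * ρ := by
    filter_upwards [h s hs] with x hx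
    exact congrArg (indB x * ·) hx
  -- step 2: condexp over m'
  have e3 : μ[ρ * indB | m'] =ᵐ[μ] ρ * μ[indB | m'] :=
    condExp_mul_of_stronglyMeasurable_left stronglyMeasurable_condExp hiρB hiB
  have heq : (f ⁻¹' s ∩ g ⁻¹' t).indicator (fun _ => (1 : ℝ)) = indB * indA := by
    funext x
    rw [indicator_inter_apply]
    simp [mul_comm, hindA, hindB]
  calc μ[(f ⁻¹' s ∩ g ⁻¹' t).indicator (fun _ => (1 : ℝ)) | m']
      =ᵐ[μ] μ[μ[(f ⁻¹' s ∩ g ⁻¹' t).indicator (fun _ => (1 : ℝ)) | m' ⊔ mβ'.comap g]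
          | m'] :=
        (condExp_condExp_of_le (le_sup_left : m' ≤ m' ⊔ mβ'.comap g) hm).symm
    _ =ᵐ[μ] μ[indB * ρ | m'] := by
        refine condExp_congr_ae ?_
        rw [heq]
        exact e1.trans e2
    _ =ᵐ[μ] μ[ρ * indB | m'] :=
        condExp_congr_ae (Eventually.of_forall fun x => mul_comm _ _)
    _ =ᵐ[μ] fun ω => ρ ω * (μ[indB | m']) ω := e3

end Aux

/-- `σ(f, g) = σ(f) ⊔ σ(g)` for the pair map. -/
lemma comap_prodMk {Ω β γ : Type*} [MeasurableSpace Ω] [mβ : MeasurableSpace β]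
    [mγ : MeasurableSpace γ] (f : Ω → β) (g : Ω → γ) :
    MeasurableSpace.comap (fun ω => (f ω, g ω)) inferInstance =
      mβ.comap f ⊔ mγ.comap g := by
  rw [show (inferInstance : MeasurableSpace (β × γ))
        = mβ.comap Prod.fst ⊔ mγ.comap Prod.snd from rfl,
    MeasurableSpace.comap_sup, MeasurableSpace.comap_comp, MeasurableSpace.comap_comp]
  rfl

/-- equivalence property (14) of the paper, abstract form: let
`U, V, Z` be measurable maps into standard Borel spaces and `T : Ω → {0,1} ⊆ ℝ`
measurable.  Assume `U ⊥⊥ T | σ(V, Z)` and the overlap condition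
`0 < E[T | σ(V, Z)] < 1` a.s.  Then `U ⊥⊥ V | σ(Z)` iff `U ⊥⊥ V | σ(Z, T)`. -/
theorem stmt18 {Ω : Type*} [MeasurableSpace Ω] [StandardBorelSpace Ω]
    (μ : Measure Ω) [IsProbabilityMeasure μ]
    {α β γ : Type*}
    [MeasurableSpace α] [StandardBorelSpace α]
    [MeasurableSpace β] [StandardBorelSpace β]
    [MeasurableSpace γ] [StandardBorelSpace γ]
    (U : Ω → α) (V : Ω → β) (Z : Ω → γ) (T : Ω → ℝ)
    (hU : Measurable U) (hV : Measurable V) (hZ : Measurable Z) (hT : Measurable T)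
    (hT01 : ∀ ω, T ω = 0 ∨ T ω = 1)
    (hUT : CondIndepFun (MeasurableSpace.comap (fun ω => (V ω, Z ω)) inferInstance)
      ((hV.prodMk hZ).comap_le) U T μ)
    (hoverlap : ∀ᵐ ω ∂μ,
      0 < (μ[T | MeasurableSpace.comap (fun ω' => (V ω', Z ω')) inferInstance]) ω ∧
      (μ[T | MeasurableSpace.comap (fun ω' => (V ω', Z ω')) inferInstance]) ω < 1) :
    CondIndepFun (MeasurableSpace.comap Z inferInstance) hZ.comap_le U V μ ↔
    CondIndepFun (MeasurableSpace.comap (fun ω => (Z ω, T ω)) inferInstance)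
      ((hZ.prodMk hT).comap_le) U V μ := by
  have hVZ : MeasurableSpace.comap (fun ω => (V ω, Z ω)) inferInstance =
      MeasurableSpace.comap V inferInstance ⊔ MeasurableSpace.comap Z inferInstance :=
    comap_prodMk V Z
  have hZT : MeasurableSpace.comap (fun ω => (Z ω, T ω)) inferInstance =
      MeasurableSpace.comap Z inferInstance ⊔ MeasurableSpace.comap T inferInstance :=
    comap_prodMk Z T
  have hmV_le : MeasurableSpace.comap V inferInstance ≤ _ := hV.comap_le
  have hmZ_le : MeasurableSpace.comap Z inferInstance ≤ _ := hZ.comap_le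
  have hmT_le : MeasurableSpace.comap T inferInstance ≤ _ := hT.comap_le
  have hmVZ_le : MeasurableSpace.comap V inferInstance ⊔
      MeasurableSpace.comap Z inferInstance ≤ _ := sup_le hmV_le hmZ_le
  have hmZT_le : MeasurableSpace.comap Z inferInstance ⊔
      MeasurableSpace.comap T inferInstance ≤ _ := sup_le hmZ_le hmT_le
  have hmVZT_le : (MeasurableSpace.comap V inferInstance ⊔
      MeasurableSpace.comap Z inferInstance) ⊔
      MeasurableSpace.comap T inferInstance ≤ _ := sup_le hmVZ_le hmT_le
  -- rearranged hypotheses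
  have hUT' : CondIndepFun (MeasurableSpace.comap V inferInstance ⊔
      MeasurableSpace.comap Z inferInstance) hmVZ_le U T μ :=
    (condIndepFun_congr' hVZ _ _).mp hUT
  rw [hVZ] at hoverlap
  have hsup : (MeasurableSpace.comap Z inferInstance ⊔
        MeasurableSpace.comap T inferInstance) ⊔ MeasurableSpace.comap V inferInstance =
      (MeasurableSpace.comap V inferInstance ⊔ MeasurableSpace.comap Z inferInstance) ⊔
        MeasurableSpace.comap T inferInstance := by
    rw [sup_assoc, sup_comm (MeasurableSpace.comap T inferInstance)
      (MeasurableSpace.comap V inferInstance), ← sup_assoc,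
      sup_comm (MeasurableSpace.comap Z inferInstance)
      (MeasurableSpace.comap V inferInstance)]
  -- the key consequence of hUT': tower over T
  have hTower_T : ∀ s : Set α, MeasurableSet s →
      μ[(U ⁻¹' s).indicator (fun _ => (1 : ℝ)) | (MeasurableSpace.comap V inferInstance ⊔
          MeasurableSpace.comap Z inferInstance) ⊔ MeasurableSpace.comap T inferInstance]
        =ᵐ[μ]
      μ[(U ⁻¹' s).indicator (fun _ => (1 : ℝ)) | MeasurableSpace.comap V inferInstance ⊔
          MeasurableSpace.comap Z inferInstance] := fun s hs =>
    tower_of_condIndepFun hmVZ_le hU hT hUT' hs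
  constructor
  · -- forward direction: overlap not needed
    intro hUV
    refine (condIndepFun_congr' hZT.symm hmZT_le _).mp ?_
    refine condIndepFun_of_tower hmZT_le hU hV ?_
    intro s hs
    set indA : Ω → ℝ := (U ⁻¹' s).indicator (fun _ => (1 : ℝ)) with hindA
    have h2 : μ[indA | MeasurableSpace.comap Z inferInstance ⊔
        MeasurableSpace.comap V inferInstance] =ᵐ[μ]
        μ[indA | MeasurableSpace.comap Z inferInstance] :=
      tower_of_condIndepFun hmZ_le hU hV hUV hs
    rw [sup_comm (MeasurableSpace.comap Z inferInstance)
      (MeasurableSpace.comap V inferInstance)] at h2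
    -- so μ[indA | (mV⊔mZ)⊔mT] =ᵐ μ[indA|mZ]
    have h3 : μ[indA | (MeasurableSpace.comap V inferInstance ⊔
        MeasurableSpace.comap Z inferInstance) ⊔ MeasurableSpace.comap T inferInstance]
        =ᵐ[μ] μ[indA | MeasurableSpace.comap Z inferInstance] :=
      (hTower_T s hs).trans h2
    have hle : MeasurableSpace.comap Z inferInstance ⊔
        MeasurableSpace.comap T inferInstance ≤
        (MeasurableSpace.comap V inferInstance ⊔
          MeasurableSpace.comap Z inferInstance) ⊔ MeasurableSpace.comap T inferInstance :=
      sup_le (le_sup_right.trans le_sup_left) le_sup_right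
    have h4 : μ[indA | MeasurableSpace.comap Z inferInstance ⊔
        MeasurableSpace.comap T inferInstance] =ᵐ[μ]
        μ[indA | MeasurableSpace.comap Z inferInstance] := by
      calc μ[indA | MeasurableSpace.comap Z inferInstance ⊔
            MeasurableSpace.comap T inferInstance]
          =ᵐ[μ] μ[μ[indA | (MeasurableSpace.comap V inferInstance ⊔
              MeasurableSpace.comap Z inferInstance) ⊔
              MeasurableSpace.comap T inferInstance] | MeasurableSpace.comap Z inferInstance ⊔
              MeasurableSpace.comap T inferInstance] :=
            (condExp_condExp_of_le hle hmVZT_le).symm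
        _ =ᵐ[μ] μ[μ[indA | MeasurableSpace.comap Z inferInstance] |
              MeasurableSpace.comap Z inferInstance ⊔
              MeasurableSpace.comap T inferInstance] := condExp_congr_ae h3
        _ = μ[indA | MeasurableSpace.comap Z inferInstance] :=
            condExp_of_stronglyMeasurable hmZT_le
              (stronglyMeasurable_condExp.mono le_sup_left) integrable_condExp
    rw [hsup]
    exact h3.trans h4.symm
  · -- backward direction: uses the overlap condition
    intro hUV'
    have hUV'' : CondIndepFun (MeasurableSpace.comap Z inferInstance ⊔
        MeasurableSpace.comap T inferInstance) hmZT_le U V μ :=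
      (condIndepFun_congr' hZT _ _).mp hUV'
    refine condIndepFun_of_tower hmZ_le hU hV ?_
    intro s hs
    set indA : Ω → ℝ := (U ⁻¹' s).indicator (fun _ => (1 : ℝ)) with hindA
    set G : Ω → ℝ := μ[indA | MeasurableSpace.comap V inferInstance ⊔
      MeasurableSpace.comap Z inferInstance] with hG
    -- tower over V given (Z,T)
    have h3 : μ[indA | (MeasurableSpace.comap Z inferInstance ⊔
        MeasurableSpace.comap T inferInstance) ⊔ MeasurableSpace.comap V inferInstance]
        =ᵐ[μ] μ[indA | MeasurableSpace.comap Z inferInstance ⊔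
          MeasurableSpace.comap T inferInstance] :=
      tower_of_condIndepFun hmZT_le hU hV hUV'' hs
    rw [hsup] at h3
    have hGh : G =ᵐ[μ] μ[indA | MeasurableSpace.comap Z inferInstance ⊔
        MeasurableSpace.comap T inferInstance] := (hTower_T s hs).symm.trans h3
    -- Doob–Dynkin via condDistrib
    haveI : Nonempty Ω := by
      rcases isEmpty_or_nonempty Ω with h | h
      · have h0 : μ Set.univ = 0 := by simp [μ.eq_zero_of_isEmpty]
        have h1 : μ Set.univ = 1 := measure_univ
        rw [h0] at h1; exact absurd h1 (by norm_num)
      · exact h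
    haveI : Nonempty α := ⟨U (Classical.arbitrary Ω)⟩
    set X : Ω → γ × ℝ := fun ω => (Z ω, T ω) with hX
    have hXm : Measurable X := hZ.prodMk hT
    have hDD : (fun ω => (condDistrib U X μ (X ω) s).toReal) =ᵐ[μ]
        μ[indA | MeasurableSpace.comap X inferInstance] :=
      condDistrib_ae_eq_condExp hXm hU hs
    have hXcomap : MeasurableSpace.comap X inferInstance =
        MeasurableSpace.comap Z inferInstance ⊔ MeasurableSpace.comap T inferInstance :=
      comap_prodMk Z T
    rw [hXcomap] at hDD
    set H : γ × ℝ → ℝ := fun p => (condDistrib U X μ p s).toReal with hH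
    have hHmeas : Measurable H :=
      (Kernel.measurable_coe _ hs).ennreal_toReal
    set h₁ : Ω → ℝ := fun ω => H (Z ω, 1) with hh₁def
    have hh₁m : Measurable[MeasurableSpace.comap Z inferInstance] h₁ :=
      hHmeas.comp ((comap_measurable Z).prodMk measurable_const)
    have hGH : G =ᵐ[μ] fun ω => H (X ω) := hGh.trans hDD.symm
    have hpt : ∀ ω, H (X ω) * T ω = h₁ ω * T ω := by
      intro ω
      rcases hT01 ω with h | h <;> simp [hX, hh₁def, h]
    -- multiply by T and condition on mV ⊔ mZ
    have hiT : Integrable T μ := by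
      refine (integrable_const (1 : ℝ)).mono' hT.aestronglyMeasurable ?_
      refine Eventually.of_forall fun ω => ?_
      rcases hT01 ω with h | h <;> simp [h]
    have hiGT : Integrable (G * T) μ := by
      refine ((integrable_condExp.bdd_mul (c := 1) hT.aestronglyMeasurable (Eventually.of_forall fun ω => ?_)).congr
        (Eventually.of_forall fun x => mul_comm _ _))
      rcases hT01 ω with h | h <;> simp [h]
    have hGTh₁T : G * T =ᵐ[μ] h₁ * T := by
      filter_upwards [hGH] with ω hω
      simp only [Pi.mul_apply, hω, hpt ω]
    have hih₁T : Integrable (h₁ * T) μ := hiGT.congr hGTh₁T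
    have hc1 : μ[G * T | MeasurableSpace.comap V inferInstance ⊔
        MeasurableSpace.comap Z inferInstance] =ᵐ[μ]
        G * μ[T | MeasurableSpace.comap V inferInstance ⊔
          MeasurableSpace.comap Z inferInstance] :=
      condExp_mul_of_stronglyMeasurable_left stronglyMeasurable_condExp hiGT hiT
    have hc2 : μ[h₁ * T | MeasurableSpace.comap V inferInstance ⊔
        MeasurableSpace.comap Z inferInstance] =ᵐ[μ]
        h₁ * μ[T | MeasurableSpace.comap V inferInstance ⊔
          MeasurableSpace.comap Z inferInstance] :=
      condExp_mul_of_stronglyMeasurable_left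
        ((hh₁m.stronglyMeasurable).mono le_sup_right) hih₁T hiT
    have hGe : G * μ[T | MeasurableSpace.comap V inferInstance ⊔
        MeasurableSpace.comap Z inferInstance] =ᵐ[μ]
        h₁ * μ[T | MeasurableSpace.comap V inferInstance ⊔
          MeasurableSpace.comap Z inferInstance] :=
      hc1.symm.trans ((condExp_congr_ae hGTh₁T).trans hc2)
    have hGh₁ : G =ᵐ[μ] h₁ := by
      filter_upwards [hGe, hoverlap] with ω hω hov
      have hne : (μ[T | MeasurableSpace.comap V inferInstance ⊔
          MeasurableSpace.comap Z inferInstance]) ω ≠ 0 := ne_of_gt hov.1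
      simp only [Pi.mul_apply] at hω
      exact mul_right_cancel₀ hne hω
    have hih₁ : Integrable h₁ μ := integrable_condExp.congr hGh₁
    -- conclude: μ[indA | mZ] =ᵐ G
    have hfin : μ[indA | MeasurableSpace.comap Z inferInstance] =ᵐ[μ] G := by
      calc μ[indA | MeasurableSpace.comap Z inferInstance]
          =ᵐ[μ] μ[G | MeasurableSpace.comap Z inferInstance] :=
            (condExp_condExp_of_le le_sup_right hmVZ_le).symm
        _ =ᵐ[μ] μ[h₁ | MeasurableSpace.comap Z inferInstance] := condExp_congr_ae hGh₁
        _ = h₁ := condExp_of_stronglyMeasurable hmZ_le hh₁m.stronglyMeasurable hih₁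
        _ =ᵐ[μ] G := hGh₁.symm
    rw [sup_comm (MeasurableSpace.comap Z inferInstance)
      (MeasurableSpace.comap V inferInstance)]
    exact hfin.symm
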